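/- Let A, B be hoops and p : A → B, s : B → A hoop homomorphisms with p ∘ s = id_B and with s a strong section, and let X = {a ∈ A | p(a) = 1}. Then for all b, b' ∈ B and all x, y ∈ X satisfying s(b) → (s(b) · x) = x and s(b') → (s(b') · y) = y, one has (s(b → b') → x) → (s(b' → b) → y) = s(b' → b) → (x → y). Hence on the set Y' = {(x, b) ∈ X × B | s(b) → (s(b) · x) = x}, Rump's L-algebra semidirect-product implication (x, b) → (y, b') = ((s(b → b') → x) → (s(b' → b) → y), b → b') coincides with the hoop semidirect-product implication (x, b) → (y, b') = (s(b' → b) → (x → y), b → b'). -/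
import Mathlib


class Hoop (α : Type*) extends CommMonoid α, HImp α where
  himp_self : ∀ x : α, x ⇨ x = 1
  mul_himp_comm : ∀ x y : α, x * (x ⇨ y) = y * (y ⇨ x)
  mul_himp_assoc : ∀ x y z : α, (x * y) ⇨ z = x ⇨ (y ⇨ z)

/-- For a split epimorphism of hoops `p : A → B` with strong section `s` and kernel
`X = {a | p a = 1}`, for all `(x,b), (y,b')` in
`Y' = {(x,b) ∈ X × B | s b → (s b · x) = x}` one has
`(s(b → b') → x) → (s(b' → b) → y) = s(b' → b) → (x → y)`; hence Rump's L-algebra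
semidirect-product implication coincides on `Y'` with the hoop semidirect-product
implication. -/
theorem stmt18 {A B : Type*} [Hoop A] [Hoop B] (p : A → B) (s : B → A)
    (hp1 : p 1 = 1) (hpm : ∀ a a' : A, p (a * a') = p a * p a')
    (hpi : ∀ a a' : A, p (a ⇨ a') = p a ⇨ p a')
    (hs1 : s 1 = 1) (hsm : ∀ b b' : B, s (b * b') = s b * s b')
    (hsi : ∀ b b' : B, s (b ⇨ b') = s b ⇨ s b')
    (hps : ∀ b : B, p (s b) = b)
    (hss : ∀ (a : A) (b : B), a ⇨ s b = s (p a) ⇨ s b) :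
    ∀ (b b' : B) (x y : A), p x = 1 → p y = 1 →
      s b ⇨ (s b * x) = x → s b' ⇨ (s b' * y) = y →
      (s (b ⇨ b') ⇨ x) ⇨ (s (b' ⇨ b) ⇨ y) = s (b' ⇨ b) ⇨ (x ⇨ y) ∧
      (((s (b ⇨ b') ⇨ x) ⇨ (s (b' ⇨ b) ⇨ y), b ⇨ b') : A × B)
        = (s (b' ⇨ b) ⇨ (x ⇨ y), b ⇨ b') := by
  intro b b' x y hpx _hpy hx hy
  -- abbreviations
  set u : A := s (b ⇨ b') with hu
  set v : A := s (b' ⇨ b) with hv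
  set t : A := s b' ⇨ (s b * x) with ht
  -- u * s b = s b' * v
  have h1 : u * s b = s b' * v := by
    rw [hu, hv, ← hsm, ← hsm, mul_comm (b ⇨ b') b, Hoop.mul_himp_comm b b']
  -- u ⇨ x = v ⇨ t
  have h2 : u ⇨ x = v ⇨ t := by
    conv_lhs => rw [← hx]
    rw [← Hoop.mul_himp_assoc, h1, mul_comm (s b') v, Hoop.mul_himp_assoc, ht]
  -- p t = b' ⇨ b
  have h3 : p t = b' ⇨ b := by
    rw [ht, hpi, hpm, hps, hps, hpx, mul_one]
  -- t ⇨ v = 1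
  have h4 : t ⇨ v = 1 := by
    rw [hv, hss t (b' ⇨ b), h3, Hoop.himp_self]
  -- v * (u ⇨ x) = t
  have h5 : v * (u ⇨ x) = t := by
    rw [h2, Hoop.mul_himp_comm v t, h4, mul_one]
  -- p (s b * x) = b
  have h6 : p (s b * x) = b := by rw [hpm, hps, hpx, mul_one]
  -- s b' * t = s b' * (v * x)
  have h7 : s b' * t = s b' * (v * x) := by
    calc s b' * t = (s b * x) * ((s b * x) ⇨ s b') := by
          rw [ht, Hoop.mul_himp_comm]
      _ = (s b * x) * (s b ⇨ s b') := by rw [hss (s b * x) b', h6]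
      _ = x * (s b * s (b ⇨ b')) := by
          rw [hsi]; rw [mul_comm (s b) x, mul_assoc]
      _ = x * s (b * (b ⇨ b')) := by rw [hsm]
      _ = x * s (b' * (b' ⇨ b)) := by rw [Hoop.mul_himp_comm b b']
      _ = s b' * (v * x) := by
          rw [hsm, hv, mul_comm x _, mul_assoc]
  -- main equality
  have main : (u ⇨ x) ⇨ (v ⇨ y) = v ⇨ (x ⇨ y) := by
    calc (u ⇨ x) ⇨ (v ⇨ y) = ((u ⇨ x) * v) ⇨ y := by rw [Hoop.mul_himp_assoc]
      _ = (v * (u ⇨ x)) ⇨ y := by rw [mul_comm]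
      _ = t ⇨ y := by rw [h5]
      _ = t ⇨ (s b' ⇨ (s b' * y)) := by rw [hy]
      _ = (s b' * t) ⇨ (s b' * y) := by
          rw [← Hoop.mul_himp_assoc, mul_comm (s b') t]
      _ = (s b' * (v * x)) ⇨ (s b' * y) := by rw [h7]
      _ = (v * x) ⇨ (s b' ⇨ (s b' * y)) := by
          rw [mul_comm (s b') (v * x), Hoop.mul_himp_assoc]
      _ = (v * x) ⇨ y := by rw [hy]
      _ = v ⇨ (x ⇨ y) := by rw [Hoop.mul_himp_assoc]
  exact ⟨main, by rw [main]⟩
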